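/- Let G be a finite minimal non-abelian p-group with exp(G) ≤ p² and with cyclic Frattini subgroup Φ(G). Then |G| = p³. -/

import Mathlib

/-- A subgroup is minimal non-abelian if it is non-abelian and all its proper
subgroups are abelian. -/
def IsMinNonab (G : Type*) [Group G] (H : Subgroup G) : Prop :=
  ¬ IsMulCommutative H ∧ ∀ K : Subgroup G, K < H → IsMulCommutative K

section Aux

variable {G : Type*} [Group G]

lemma my_mem_frattini_iff {x : G} :
    x ∈ frattini G ↔ ∀ M : Subgroup G, IsCoatom M → x ∈ M := by
  simp [frattini, Order.radical, Subgroup.mem_iInf]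

/-- In a finite `p`-group, a maximal subgroup is normal of index `p`. -/
lemma coatom_normal_index_p {p : ℕ} (hp : p.Prime) [Finite G] (hG : IsPGroup p G)
    {M : Subgroup G} (hM : IsCoatom M) : M.Normal ∧ M.index = p := by
  haveI : Fact p.Prime := ⟨hp⟩
  haveI : Group.IsNilpotent G := hG.isNilpotent
  have hnorm : M.Normal :=
    Subgroup.NormalizerCondition.normal_of_coatom M normalizerCondition_of_isNilpotent hM
  refine ⟨hnorm, ?_⟩
  haveI := hnorm
  have hq : IsPGroup p (G ⧸ M) := hG.to_quotient M
  obtain ⟨k, hk⟩ := hq.exists_card_eq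
  have hindex : M.index = p ^ k := by
    rw [Subgroup.index, hk]
  have hk0 : k ≠ 0 := by
    intro h
    subst h
    rw [pow_zero] at hindex
    exact hM.1 (Subgroup.index_eq_one.mp hindex)
  have hk1 : k = 1 := by
    by_contra hk1
    have hk2 : 2 ≤ k := by omega
    -- get a subgroup of order p in the quotient
    obtain ⟨H, hH⟩ := Sylow.exists_subgroup_card_pow_prime (G := G ⧸ M) p
      (n := 1) (by rw [hk]; exact pow_dvd_pow p (by omega))
    rw [pow_one] at hH
    set K : Subgroup G := H.comap (QuotientGroup.mk' M) with hK
    have hMK : M ≤ K := by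
      intro g hg
      show QuotientGroup.mk' M g ∈ H
      have : QuotientGroup.mk' M g = 1 := (QuotientGroup.eq_one_iff g).mpr hg
      rw [this]; exact one_mem H
    have hMKne : M ≠ K := by
      intro h
      have hHbot : H = ⊥ := by
        rw [eq_bot_iff]
        intro q hqH
        obtain ⟨g, rfl⟩ := QuotientGroup.mk'_surjective M q
        have hgK : g ∈ K := hqH
        rw [← h] at hgK
        show QuotientGroup.mk' M g ∈ (⊥ : Subgroup (G ⧸ M))
        rw [Subgroup.mem_bot]
        exact (QuotientGroup.eq_one_iff g).mpr hgK
      rw [hHbot, Subgroup.card_bot] at hH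
      exact hp.ne_one hH.symm
    have hKtop : K = ⊤ := hM.2 K (lt_of_le_of_ne hMK hMKne)
    have hHtop : H = ⊤ := by
      rw [eq_top_iff]
      intro q _
      obtain ⟨g, rfl⟩ := QuotientGroup.mk'_surjective M q
      have : g ∈ K := by rw [hKtop]; trivial
      exact this
    rw [hHtop] at hH
    have hcard : Nat.card (G ⧸ M) = p := by
      rw [← hH]
      exact (Nat.card_congr Subgroup.topEquiv.toEquiv).symm
    have hpk : p ^ 1 = p ^ k := by rw [pow_one]; exact hcard ▸ hk
    have := Nat.pow_right_injective hp.two_le hpk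
    omega
  rw [hk1, pow_one] at hindex
  exact hindex

/-- Decomposition of elements of `H ⊔ zpowers x` when all commutators lie in `H`. -/
lemma my_mem_sup_zpowers {H : Subgroup G}
    (hH : ∀ u v : G, u⁻¹ * v⁻¹ * u * v ∈ H) (x : G) {g : G}
    (hg : g ∈ H ⊔ Subgroup.zpowers x) : ∃ h ∈ H, ∃ k : ℤ, g = h * x ^ k := by
  have hconj : ∀ (c h : G), h ∈ H → c * h * c⁻¹ ∈ H := by
    intro c h hh
    have : c * h * c⁻¹ = h * (h⁻¹ * c * h * c⁻¹) := by group
    rw [this]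
    exact H.mul_mem hh (by simpa using hH h c⁻¹)
  set T : Subgroup G :=
    { carrier := {g | ∃ h ∈ H, ∃ k : ℤ, g = h * x ^ k}
      one_mem' := ⟨1, H.one_mem, 0, by group⟩
      mul_mem' := by
        rintro a b ⟨h₁, hh₁, k₁, rfl⟩ ⟨h₂, hh₂, k₂, rfl⟩
        refine ⟨h₁ * (x ^ k₁ * h₂ * (x ^ k₁)⁻¹), H.mul_mem hh₁ (hconj _ _ hh₂), k₁ + k₂, ?_⟩
        rw [zpow_add]
        group
      inv_mem' := by
        rintro a ⟨h, hh, k, rfl⟩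
        exact ⟨x ^ (-k) * h⁻¹ * (x ^ (-k))⁻¹, hconj _ _ (H.inv_mem hh), -k, by group⟩ } with hT
  have hsup : H ⊔ Subgroup.zpowers x ≤ T := by
    refine sup_le (fun h hh => ⟨h, hh, 0, by group⟩) ?_
    intro g hg
    obtain ⟨k, rfl⟩ := Subgroup.mem_zpowers_iff.mp hg
    exact ⟨1, H.one_mem, k, by group⟩
  exact hsup hg

end Aux

/-- A finite minimal non-abelian `p`-group with exponent at most `p²` and cyclic
Frattini subgroup has order `p³`. -/
theorem stmt10 {G : Type*} [Group G] [Finite G] (p : ℕ) (hp : p.Prime)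
    (hG : IsPGroup p G) (hmin : IsMinNonab G ⊤)
    (hexp : Monoid.exponent G ≤ p ^ 2)
    (hfr : IsCyclic ↥(frattini G)) :
    Nat.card G = p ^ 3 := by
  haveI : Fact p.Prime := ⟨hp⟩
  classical
  -- commutativity helper for small groups
  have comm_small : ∀ (H : Type _) [Group H] [Finite H], IsPGroup p H →
      Nat.card H ≤ p ^ 2 → ∀ a b : H, a * b = b * a := by
    intro H _ _ hH hcard a b
    obtain ⟨n, hn⟩ := hH.exists_card_eq
    rw [hn] at hcard
    have hn2 : n ≤ 2 := by
      by_contra h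
      exact absurd hcard (not_le.mpr (Nat.pow_lt_pow_right hp.one_lt (by omega)))
    interval_cases n
    · have : Nat.card H = 1 := by simpa using hn
      haveI : Subsingleton H := Nat.card_eq_one_iff_unique.mp this |>.1
      exact Subsingleton.elim _ _
    · rw [pow_one] at hn
      haveI : IsCyclic H := isCyclic_of_prime_card hn
      letI := IsCyclic.commGroup (α := H)
      exact mul_comm a b
    · exact IsPGroup.commutative_of_card_eq_prime_sq hn a b
  -- G is not commutative; extract non-commuting elements
  have hex : ∃ a b : G, a * b ≠ b * a := by
    by_contra h
    push_neg at h
    exact hmin.1 ⟨⟨fun x y => Subtype.ext (h x y)⟩⟩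
  obtain ⟨a, b, hab⟩ := hex
  have proper_comm : ∀ K : Subgroup G, K ≠ ⊤ → IsMulCommutative K := fun K hK =>
    hmin.2 K (lt_top_iff_ne_top.mpr hK)
  -- the centralizers of a and b
  set A := Subgroup.centralizer ({a} : Set G) with hA
  set B := Subgroup.centralizer ({b} : Set G) with hB
  have haA : a ∈ A := Subgroup.mem_centralizer_iff.mpr (by simp)
  have hbB : b ∈ B := Subgroup.mem_centralizer_iff.mpr (by simp)
  have hbA : b ∉ A := by
    intro h
    exact hab (Subgroup.mem_centralizer_iff.mp h a (by simp))
  have haB : a ∉ B := by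
    intro h
    exact hab (Subgroup.mem_centralizer_iff.mp h b (by simp)).symm
  -- centralizers of non-central elements generating with others: maximality
  have coatomA : ∀ (x : G) (X : Subgroup G), X = Subgroup.centralizer {x} → X ≠ ⊤ →
      IsCoatom X := by
    intro x X hX hXtop
    refine ⟨hXtop, ?_⟩
    intro K hK
    by_contra hKtop
    haveI := proper_comm K hKtop
    have hxX : x ∈ X := hX ▸ Subgroup.mem_centralizer_iff.mpr (by simp)
    have hxK : x ∈ K := le_of_lt hK hxX
    have : K ≤ X := by
      intro y hy
      rw [hX]
      refine Subgroup.mem_centralizer_iff.mpr ?_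
      intro z hz
      rw [Set.mem_singleton_iff] at hz
      subst hz
      exact Subgroup.mul_comm_of_mem_isMulCommutative (H := K) hxK hy
    exact absurd (lt_of_lt_of_le hK this) (lt_irrefl X)
  have hAcoatom : IsCoatom A := coatomA a A rfl (fun h => hbA (h ▸ trivial))
  have hBcoatom : IsCoatom B := coatomA b B rfl (fun h => haB (h ▸ trivial))
  -- Z = center G = A ⊓ B
  set Z := Subgroup.center G with hZ
  have hABZ : A ⊓ B = Z := by
    apply le_antisymm
    · rintro x ⟨hxA, hxB⟩
      rw [hZ, Subgroup.mem_center_iff]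
      intro g
      -- top is generated by a and b
      have hgen : Subgroup.closure ({a, b} : Set G) = ⊤ := by
        by_contra h
        haveI := proper_comm _ h
        have ha' : a ∈ Subgroup.closure ({a, b} : Set G) :=
          Subgroup.subset_closure (by simp)
        have hb' : b ∈ Subgroup.closure ({a, b} : Set G) :=
          Subgroup.subset_closure (by simp)
        exact hab (Subgroup.mul_comm_of_mem_isMulCommutative _ ha' hb')
      have : Subgroup.closure ({a, b} : Set G) ≤ Subgroup.centralizer {x} := by
        rw [Subgroup.closure_le]
        refine Set.insert_subset_iff.mpr ⟨?_, Set.singleton_subset_iff.mpr ?_⟩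
        · exact SetLike.mem_coe.mpr (Subgroup.mem_centralizer_iff.mpr
            (by simpa using (Subgroup.mem_centralizer_iff.mp hxA a (by simp)).symm))
        · exact SetLike.mem_coe.mpr (Subgroup.mem_centralizer_iff.mpr
            (by simpa using (Subgroup.mem_centralizer_iff.mp hxB b (by simp)).symm))
      have hg' : g ∈ Subgroup.centralizer {x} := by
        rw [hgen] at this; exact this trivial
      exact (Subgroup.mem_centralizer_iff.mp hg' x (by simp)).symm
    · exact le_inf (Subgroup.center_le_centralizer _) (Subgroup.center_le_centralizer _)
  -- the center is contained in the Frattini subgroup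
  have hZF : Z ≤ frattini G := by
    intro z hz
    rw [my_mem_frattini_iff]
    intro M hM
    by_contra hzM
    have hMZ : ¬ Z ≤ M := fun h => hzM (h hz)
    have hsup : M ⊔ Z = ⊤ := hM.2 _ (lt_of_le_of_ne le_sup_left
      (fun h => hMZ (h ▸ le_sup_right)))
    haveI := proper_comm M hM.1
    have hMcenter : M ≤ Z := by
      intro m hm
      rw [hZ, Subgroup.mem_center_iff]
      intro g
      have : M ⊔ Z ≤ Subgroup.centralizer {m} := by
        refine sup_le ?_ ?_
        · intro y hy
          exact Subgroup.mem_centralizer_iff.mpr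
            (by simpa using Subgroup.mul_comm_of_mem_isMulCommutative (H := M) hm hy)
        · intro y hy
          exact Subgroup.mem_centralizer_iff.mpr
            (by simpa using (Subgroup.mem_center_iff.mp hy m))
      have hg : g ∈ Subgroup.centralizer {m} := by rw [hsup] at this; exact this trivial
      exact (Subgroup.mem_centralizer_iff.mp hg m (by simp)).symm
    have : (⊤ : Subgroup G) ≤ Z := by
      rw [← hsup]; exact sup_le hMcenter le_rfl
    refine hmin.1 ⟨⟨fun x y => Subtype.ext ?_⟩⟩
    exact Subgroup.mem_center_iff.mp (this (x := (y : G)) trivial) x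
  have hFZ : frattini G ≤ Z := by
    rw [← hABZ]
    exact le_inf (frattini_le_coatom hAcoatom) (frattini_le_coatom hBcoatom)
  have hZfr : frattini G = Z := le_antisymm hFZ hZF
  haveI hZcyc : IsCyclic ↥Z := by rw [← hZfr]; exact hfr
  -- exponent divides p^2
  have hexpdvd : Monoid.exponent G ∣ p ^ 2 := by
    have h1 : Monoid.exponent G ∣ Nat.card G := Group.exponent_dvd_nat_card
    obtain ⟨n, hn⟩ := hG.exists_card_eq
    rw [hn] at h1
    obtain ⟨k, hk, he⟩ := (Nat.dvd_prime_pow hp).mp h1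
    have : p ^ k ≤ p ^ 2 := he ▸ hexp
    have hk2 : k ≤ 2 := by
      by_contra h
      exact absurd this (not_le.mpr (Nat.pow_lt_pow_right hp.one_lt (by omega)))
    rw [he]
    exact pow_dvd_pow p hk2
  have hxpp : ∀ x : G, x ^ p ^ 2 = 1 := fun x =>
    orderOf_dvd_iff_pow_eq_one.mp ((Monoid.order_dvd_exponent x).trans hexpdvd) |>.symm ▸
      (orderOf_dvd_iff_pow_eq_one.mp ((Monoid.order_dvd_exponent x).trans hexpdvd))
  -- p-th powers lie in the center
  have hindexA : A.index = p := (coatom_normal_index_p hp hG hAcoatom).2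
  have hindexB : B.index = p := (coatom_normal_index_p hp hG hBcoatom).2
  have hGpZ : ∀ x : G, x ^ p ∈ Z := by
    intro x
    apply hFZ
    rw [my_mem_frattini_iff]
    intro M hM
    obtain ⟨hnorm, hidx⟩ := coatom_normal_index_p hp hG hM
    haveI := hnorm
    have := Subgroup.pow_index_mem M x
    rwa [hidx] at this
  -- index of the center is at most p^2
  have hindexZ : Z.index ≤ p ^ 2 := by
    rw [← hABZ]
    calc (A ⊓ B).index ≤ A.index * B.index := Subgroup.index_inf_le
    _ = p ^ 2 := by rw [hindexA, hindexB, sq]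
  -- the quotient by the center is commutative, so commutators are central
  have hcomm_center : ∀ x y : G, x⁻¹ * y⁻¹ * x * y ∈ Z := by
    intro x y
    have hQ : ∀ u v : G ⧸ Z, u * v = v * u := by
      apply comm_small _ (hG.to_quotient Z)
      rw [← Subgroup.index]
      exact hindexZ
    have : QuotientGroup.mk' Z (x⁻¹ * y⁻¹ * x * y) = 1 := by
      simp only [map_mul, map_inv]
      rw [mul_assoc, hQ (QuotientGroup.mk' Z x) (QuotientGroup.mk' Z y)]
      group
    exact (QuotientGroup.eq_one_iff _).mp this
  -- commutators have order dividing p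
  have hcomm_p : ∀ x y : G, (x⁻¹ * y⁻¹ * x * y) ^ p = 1 := by
    intro x y
    set c := x⁻¹ * y⁻¹ * x * y with hc
    have hcZ : c ∈ Z := hcomm_center x y
    have hxc : y⁻¹ * x * y = x * c := by rw [hc]; group
    have h1 : y⁻¹ * x ^ p * y = (y⁻¹ * x * y) ^ p := by
      have := map_pow (MulAut.conj y⁻¹) x p
      simpa [MulAut.conj_apply, inv_inv, mul_assoc] using this
    have hxcomm : Commute x c := Subgroup.mem_center_iff.mp hcZ x
    have h2 : (x * c) ^ p = x ^ p * c ^ p := hxcomm.mul_pow p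
    have h3 : y⁻¹ * x ^ p * y = x ^ p := by
      have hcen := Subgroup.mem_center_iff.mp (hGpZ x) y
      calc y⁻¹ * x ^ p * y = y⁻¹ * (x ^ p * y) := by rw [mul_assoc]
      _ = y⁻¹ * (y * x ^ p) := by rw [← hcen]
      _ = x ^ p := by group
    have : x ^ p = x ^ p * c ^ p := by
      conv_lhs => rw [← h3, h1, hxc, h2]
    exact (mul_eq_left.mp this.symm)
  -- main claim: every central element has order dividing p
  have hZp : ∀ z : G, z ∈ Z → z ^ p = 1 := by
    intro z hzZ
    by_contra hzp
    -- the subgroup W of central elements of order dividing p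
    set W : Subgroup G :=
      { carrier := {g | g ∈ Z ∧ g ^ p = 1}
        one_mem' := ⟨Z.one_mem, one_pow p⟩
        mul_mem' := by
          rintro u v ⟨huZ, hup⟩ ⟨hvZ, hvp⟩
          refine ⟨Z.mul_mem huZ hvZ, ?_⟩
          have hcomm : Commute u v := (Subgroup.mem_center_iff.mp huZ v).symm
          rw [hcomm.mul_pow, hup, hvp, one_mul]
        inv_mem' := by
          rintro u ⟨huZ, hup⟩
          exact ⟨Z.inv_mem huZ, by rw [inv_pow, hup, inv_one]⟩ } with hW
    have hWmem : ∀ g : G, g ∈ W ↔ g ∈ Z ∧ g ^ p = 1 := fun g => Iff.rfl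
    have hzW : z ∉ W := fun h => hzp ((hWmem z).mp h).2
    have hGpW : ∀ x : G, x ^ p ∈ W := by
      intro x
      refine ⟨hGpZ x, ?_⟩
      rw [← pow_mul, ← sq]
      exact hxpp x
    have hcommW : ∀ u v : G, u⁻¹ * v⁻¹ * u * v ∈ W :=
      fun u v => ⟨hcomm_center u v, hcomm_p u v⟩
    -- take a maximal subgroup not containing z
    obtain ⟨M₀, hWM₀, hmax⟩ := Finite.exists_le_maximal (a := W)
      (p := fun H : Subgroup G => z ∉ H) hzW
    have hzM₀ : z ∉ M₀ := hmax.prop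
    have hcommM₀ : ∀ u v : G, u⁻¹ * v⁻¹ * u * v ∈ M₀ := fun u v => hWM₀ (hcommW u v)
    -- key: M₀ ⊔ ⟨z⟩ = ⊤
    have key : ∀ x : G, x ∈ M₀ ⊔ Subgroup.zpowers z := by
      intro x
      by_cases hxM : x ∈ M₀
      · exact Subgroup.mem_sup_left hxM
      · have hzK : z ∈ M₀ ⊔ Subgroup.zpowers x := by
          by_contra hzK
          have : M₀ ⊔ Subgroup.zpowers x ≤ M₀ := hmax.2 hzK le_sup_left
          exact hxM (this (Subgroup.mem_sup_right (Subgroup.mem_zpowers x)))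
        obtain ⟨h, hhM, k, hzk⟩ := my_mem_sup_zpowers hcommM₀ x hzK
        by_cases hdvd : (p : ℤ) ∣ k
        · obtain ⟨t, rfl⟩ := hdvd
          exfalso
          apply hzM₀
          rw [hzk]
          refine M₀.mul_mem hhM ?_
          have : x ^ ((p : ℤ) * t) = (x ^ p) ^ t := by
            rw [zpow_mul, zpow_natCast]
          rw [this]
          exact Subgroup.zpow_mem M₀ (hWM₀ (hGpW x)) t
        · have hcop : IsCoprime (p : ℤ) k :=
            (Nat.prime_iff_prime_int.mp hp).coprime_iff_not_dvd.mpr hdvd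
          obtain ⟨u, v, huv⟩ := hcop
          have hx1 : x = (x ^ (p : ℤ)) ^ u * (x ^ k) ^ v := by
            rw [← zpow_mul, ← zpow_mul, ← zpow_add, mul_comm ((p:ℤ)) u, mul_comm k v, huv,
              zpow_one]
          have hxk : x ^ k = h⁻¹ * z := by rw [hzk]; group
          rw [hx1, hxk]
          refine Subgroup.mul_mem _ ?_ ?_
          · have : x ^ (p : ℤ) = x ^ p := zpow_natCast x p
            rw [this]
            exact Subgroup.zpow_mem _ (Subgroup.mem_sup_left (hWM₀ (hGpW x))) u
          · refine Subgroup.zpow_mem _ (Subgroup.mul_mem _ ?_ ?_) v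
            · exact Subgroup.mem_sup_left (M₀.inv_mem hhM)
            · exact Subgroup.mem_sup_right (Subgroup.mem_zpowers z)
    -- M₀ is a coatom
    have hM₀coatom : IsCoatom M₀ := by
      constructor
      · intro h
        exact hzM₀ (h ▸ trivial)
      · intro K hK
        have hzK : z ∈ K := by
          by_contra hzK
          exact absurd (hmax.2 hzK hK.le) hK.not_ge
        rw [eq_top_iff]
        intro g _
        have := key g
        have hle : M₀ ⊔ Subgroup.zpowers z ≤ K :=
          sup_le hK.le ((Subgroup.zpowers_le).mpr hzK)
        exact hle this
    -- contradiction: z is central, hence in the Frattini subgroup, hence in M₀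
    exact hzM₀ (my_mem_frattini_iff.mp (hZF hzZ) M₀ hM₀coatom)
  -- hence the center has order dividing p
  have hcardZ : Nat.card ↥Z ∣ p := by
    have hexpZ : Monoid.exponent ↥Z ∣ p := by
      apply Monoid.exponent_dvd_of_forall_pow_eq_one
      intro w
      ext
      push_cast
      exact hZp (w : G) w.2
    rw [← IsCyclic.exponent_eq_card]
    exact hexpZ
  -- count
  have hcount : Nat.card ↥Z * Z.index = Nat.card G := Subgroup.card_mul_index Z
  have hcard_le : Nat.card G ≤ p ^ 3 := by
    rw [← hcount]
    calc Nat.card ↥Z * Z.index ≤ p * p ^ 2 :=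
      Nat.mul_le_mul (Nat.le_of_dvd hp.pos hcardZ) hindexZ
    _ = p ^ 3 := by ring
  have hcard_ge : p ^ 3 ≤ Nat.card G := by
    obtain ⟨n, hn⟩ := hG.exists_card_eq
    by_contra h
    push_neg at h
    have hcomm := comm_small G hG (by
      rw [hn] at h ⊢
      have : n < 3 := by
        by_contra hn3
        exact absurd h (not_lt.mpr (Nat.pow_le_pow_right hp.one_le (by omega)))
      exact Nat.pow_le_pow_right hp.one_le (by omega))
    exact hmin.1 ⟨⟨fun x y => Subtype.ext (hcomm x y)⟩⟩
  omega
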